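/- Let (X, m) be a σ-finite measure space, {T_t : t > 0} a family of operators on L^p(X,m) with 1 ≤ p < ∞, and γ > 0. Suppose that g(x) := lim_{t→0+} T_t f(x) exists and is finite for m-a.e. x ∈ X. Then (1/γ) ‖g‖_{L^p(X,m)}^p ≤ liminf_{λ→∞} λ^p (m × w_γ)({(x,t) ∈ X × (0,∞) : |T_t f(x)| / t^{γ/p} > λ}). -/

import Mathlib

open MeasureTheory Filter Set
open scoped ENNReal

noncomputable section

/-- The measure `w_γ` on `(0,∞)` with density `t^(γ-1)`. -/
def wGamma (γ : ℝ) : Measure ℝ :=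
  (volume.restrict (Set.Ioi (0 : ℝ))).withDensity fun t => ENNReal.ofReal (t ^ (γ - 1))

lemma wGamma_Ioo {γ : ℝ} (hγ : 0 < γ) {a : ℝ} (ha : 0 ≤ a) :
    wGamma γ (Set.Ioo 0 a) = ENNReal.ofReal (a ^ γ / γ) := by
  rw [wGamma, withDensity_apply _ measurableSet_Ioo,
    Measure.restrict_restrict measurableSet_Ioo,
    Set.Ioo_inter_Ioi, max_self]
  have hint : IntegrableOn (fun t => t ^ (γ - 1)) (Set.Ioo 0 a) := by
    have := (intervalIntegral.intervalIntegrable_rpow' (a := 0) (b := a) (r := γ - 1)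
      (by linarith)).1
    exact this.mono_set Set.Ioo_subset_Ioc_self
  rw [← MeasureTheory.ofReal_integral_eq_lintegral_ofReal hint
    (Filter.eventually_of_mem (self_mem_ae_restrict measurableSet_Ioo)
      fun t ht => Real.rpow_nonneg (le_of_lt ht.1) _)]
  congr 1
  rw [← integral_Ioc_eq_integral_Ioo, ← intervalIntegral.integral_of_le ha,
    integral_rpow (Or.inl (by linarith))]
  simp [Real.zero_rpow (by linarith : γ ≠ 0)]

-- key pointwise step, for one x
lemma pointwise_bound {γ p : ℝ} (hγ : 0 < γ) (hp0 : 0 < p)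
    (u : ℝ → ℝ) (G : ℝ) (hG : 0 < G)
    (hu : ∀ᶠ t in nhdsWithin 0 (Set.Ioi 0), G < |u t|) :
    ∀ᶠ l in (atTop : Filter ℝ),
      ENNReal.ofReal (G ^ p / γ) ≤
        ENNReal.ofReal (l ^ p) * wGamma γ {t : ℝ | 0 < t ∧ l * t ^ (γ / p) < |u t|} := by
  obtain ⟨δ, hδ0, hδ⟩ := mem_nhdsGT_iff_exists_Ioo_subset.1 hu
  simp only [Set.mem_Ioi] at hδ0
  filter_upwards [eventually_ge_atTop (max 1 (G / δ ^ (γ / p)))] with l hl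
  have hl1 : (1 : ℝ) ≤ l := le_trans (le_max_left _ _) hl
  have hl0 : 0 < l := lt_of_lt_of_le one_pos hl1
  set a : ℝ := (G / l) ^ (p / γ) with ha_def
  have hGl : 0 < G / l := div_pos hG hl0
  have ha0 : 0 < a := Real.rpow_pos_of_pos hGl _
  have haδ : a ≤ δ := by
    have hd : 0 < δ ^ (γ / p) := Real.rpow_pos_of_pos hδ0 _
    have h1 : G / l ≤ δ ^ (γ / p) := by
      rw [div_le_iff₀ hl0, mul_comm]
      exact (div_le_iff₀ hd).1 (le_trans (le_max_right _ _) hl)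
    calc a ≤ (δ ^ (γ / p)) ^ (p / γ) :=
          Real.rpow_le_rpow (le_of_lt hGl) h1 (le_of_lt (div_pos hp0 hγ))
      _ = δ := by
          rw [← Real.rpow_mul (le_of_lt hδ0)]
          rw [div_mul_div_comm, mul_comm γ p, div_self (by positivity)]
          exact Real.rpow_one δ
  have hsub : Set.Ioo 0 a ⊆ {t : ℝ | 0 < t ∧ l * t ^ (γ / p) < |u t|} := by
    intro t ht
    refine ⟨ht.1, ?_⟩
    have h2 : t ^ (γ / p) < G / l := by
      calc t ^ (γ / p) < a ^ (γ / p) :=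
            Real.rpow_lt_rpow (le_of_lt ht.1) ht.2 (div_pos hγ hp0)
        _ = G / l := by
            rw [ha_def, ← Real.rpow_mul (le_of_lt hGl)]
            rw [div_mul_div_comm, mul_comm p γ, div_self (by positivity)]
            exact Real.rpow_one _
    have h3 : l * t ^ (γ / p) < G := by
      have := mul_lt_mul_of_pos_left h2 hl0
      rwa [mul_div_cancel₀ _ (ne_of_gt hl0)] at this
    exact lt_trans h3 (hδ ⟨ht.1, lt_of_lt_of_le ht.2 haδ⟩)
  have hmono := measure_mono (μ := wGamma γ) hsub
  rw [wGamma_Ioo hγ (le_of_lt ha0)] at hmono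
  have haγ : a ^ γ = G ^ p / l ^ p := by
    rw [ha_def, ← Real.rpow_mul (le_of_lt hGl), div_mul_cancel₀ _ (ne_of_gt hγ),
      Real.div_rpow hG.le hl0.le]
  have hlp : (0:ℝ) < l ^ p := Real.rpow_pos_of_pos hl0 p
  calc ENNReal.ofReal (G ^ p / γ)
      = ENNReal.ofReal (l ^ p) * ENNReal.ofReal (a ^ γ / γ) := by
        rw [← ENNReal.ofReal_mul hlp.le]
        congr 1
        rw [haγ]
        field_simp
    _ ≤ ENNReal.ofReal (l ^ p) * wGamma γ {t : ℝ | 0 < t ∧ l * t ^ (γ / p) < |u t|} :=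
        by gcongr


/-- Theorem (Maximal, part (ii)): if `T_t f (x)` converges, as `t → 0+`, to a finite limit
`g x` for `m`-a.e. `x`, then `(1/γ) ‖g‖_p^p` is bounded by the `liminf` as `λ → ∞` of
`λ^p (m × w_γ)({(x,t) : |T_t f x| / t^(γ/p) > λ})`. -/
theorem lower_bound_from_pointwise_limit
    {X : Type*} [MeasurableSpace X] (m : Measure X) [SigmaFinite m]
    (p γ : ℝ) (hp : 1 ≤ p) (hγ : 0 < γ)
    (T : ℝ → X → ℝ) (hT : Measurable fun q : X × ℝ => T q.2 q.1)
    (g : X → ℝ)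
    (hlim : ∀ᵐ x ∂m, Tendsto (fun t => T t x) (nhdsWithin 0 (Set.Ioi 0)) (nhds (g x))) :
    ENNReal.ofReal (1 / γ) * ∫⁻ x, ENNReal.ofReal (|g x| ^ p) ∂m
      ≤ Filter.liminf (fun l : ℝ => ENNReal.ofReal (l ^ p) *
          (m.prod (wGamma γ)) {q : X × ℝ | 0 < q.2 ∧ l * q.2 ^ (γ / p) < |T q.2 q.1|})
        Filter.atTop := by
  have hp0 : 0 < p := lt_of_lt_of_le one_pos hp
  haveI : SFinite (wGamma γ) := by unfold wGamma; infer_instance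
  set E : ℝ → Set (X × ℝ) :=
    fun l => {q : X × ℝ | 0 < q.2 ∧ l * q.2 ^ (γ / p) < |T q.2 q.1|} with hE
  set F : ℝ → ℝ≥0∞ :=
    fun l => ENNReal.ofReal (l ^ p) * (m.prod (wGamma γ)) (E l) with hFdef
  have hmeasE : ∀ l, MeasurableSet (E l) := by
    intro l
    exact (measurable_snd measurableSet_Ioi).inter
      (measurableSet_lt (((by fun_prop : Measurable fun t : ℝ => t ^ (γ / p)).comp measurable_snd).const_mul l) hT.abs)
  set h : ℝ → X → ℝ≥0∞ :=
    fun l x => ENNReal.ofReal (l ^ p) * wGamma γ (Prod.mk x ⁻¹' E l) with hhdef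
  have hF : ∀ l, F l = ∫⁻ x, h l x ∂m := by
    intro l
    show ENNReal.ofReal (l ^ p) * (m.prod (wGamma γ)) (E l) = _
    rw [Measure.prod_apply (hmeasE l),
      ← lintegral_const_mul' _ _ ENNReal.ofReal_ne_top]
  have hmeash : ∀ l, Measurable (h l) := fun l =>
    (measurable_measure_prodMk_left (hmeasE l)).const_mul _
  -- pointwise a.e. bound
  have hae : ∀ᵐ x ∂m, ∀ u : ℕ → ℝ, Tendsto u atTop atTop →
      ENNReal.ofReal (|g x| ^ p / γ) ≤ atTop.liminf (fun n => h (u n) x) := by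
    filter_upwards [hlim] with x hx u hu
    rcases eq_or_lt_of_le (abs_nonneg (g x)) with hg0 | hg0
    · rw [← hg0, Real.zero_rpow hp0.ne', zero_div, ENNReal.ofReal_zero]
      exact bot_le
    · set G := |g x| with hGdef
      have key : ∀ ε : ℝ, 0 < ε → ε < 1 →
          ENNReal.ofReal (((1 - ε) * G) ^ p / γ) ≤ atTop.liminf (fun n => h (u n) x) := by
        intro ε hε hε1
        have habs : Tendsto (fun t => |T t x|) (nhdsWithin 0 (Set.Ioi 0)) (nhds G) :=
          (continuous_abs.tendsto _).comp hx
        have hevt : ∀ᶠ t in nhdsWithin 0 (Set.Ioi 0), (1 - ε) * G < |T t x| :=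
          habs.eventually (eventually_gt_nhds (by nlinarith))
        have hptw := pointwise_bound hγ hp0 (fun t => T t x) ((1 - ε) * G)
          (by nlinarith) hevt
        have hevn : ∀ᶠ n in atTop,
            ENNReal.ofReal (((1 - ε) * G) ^ p / γ) ≤ h (u n) x := hu.eventually hptw
        exact le_liminf_of_le (by isBoundedDefault) hevn
      -- let ε → 0
      have h1 : Tendsto (fun n : ℕ => 1 / ((n : ℝ) + 1)) atTop (nhds 0) :=
        tendsto_one_div_add_atTop_nhds_zero_nat
      have h2 : Tendsto (fun n : ℕ => (1 - 1 / ((n : ℝ) + 1)) * G) atTop (nhds G) := by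
        have h2' : Tendsto (fun n : ℕ => (1 - 1 / ((n : ℝ) + 1)) * G) atTop
            (nhds ((1 - 0) * G)) :=
          Tendsto.mul (Tendsto.sub (tendsto_const_nhds (x := (1:ℝ))) h1)
            (tendsto_const_nhds (x := G))
        simpa using h2'
      have h3 : ContinuousAt (fun y : ℝ => ENNReal.ofReal (y ^ p / γ)) G :=
        ENNReal.continuous_ofReal.continuousAt.comp
          ((Real.continuousAt_rpow_const _ _ (Or.inl hg0.ne')).div_const γ)
      have h4 := (h3.tendsto.comp h2 :)
      refine le_of_tendsto h4 ?_
      filter_upwards [eventually_ge_atTop 1] with n hn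
      have hεpos : 0 < 1 / ((n : ℝ) + 1) := by positivity
      have hεlt : 1 / ((n : ℝ) + 1) < 1 := by
        rw [div_lt_one (by positivity)]
        have : (1 : ℝ) ≤ (n : ℝ) := by exact_mod_cast hn
        linarith
      exact key _ hεpos hεlt
  -- rewrite the left-hand side
  have eqI : ENNReal.ofReal (1 / γ) * ∫⁻ x, ENNReal.ofReal (|g x| ^ p) ∂m
      = ∫⁻ x, ENNReal.ofReal (|g x| ^ p / γ) ∂m := by
    rw [← lintegral_const_mul' _ _ ENNReal.ofReal_ne_top]
    congr 1
    funext x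
    rw [← ENNReal.ofReal_mul (by positivity : (0:ℝ) ≤ 1 / γ)]
    congr 1
    field_simp
  rw [eqI]
  refine (le_liminf_iff).2 ?_
  intro b hb
  by_contra hcon
  rw [Filter.not_eventually] at hcon
  have hfreq : ∀ n : ℕ, ∃ l ≥ (n : ℝ), ¬ b < F l := fun n =>
    Filter.frequently_atTop.1 hcon n
  choose u hu1 hu2 using hfreq
  have huT : Tendsto u atTop atTop :=
    tendsto_atTop_mono hu1 tendsto_natCast_atTop_atTop
  have hub : ∀ n, F (u n) ≤ b := fun n => not_lt.1 (hu2 n)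
  have hlim1 : atTop.liminf (fun n => F (u n)) ≤ b :=
    liminf_le_of_frequently_le (Filter.Eventually.frequently
      (Filter.Eventually.of_forall hub))
  have hfatou : ∫⁻ x, atTop.liminf (fun n => h (u n) x) ∂m
      ≤ atTop.liminf (fun n => F (u n)) := by
    simp_rw [hF]
    exact lintegral_liminf_le (fun n => hmeash (u n))
  have hmono2 : ∫⁻ x, ENNReal.ofReal (|g x| ^ p / γ) ∂m
      ≤ ∫⁻ x, atTop.liminf (fun n => h (u n) x) ∂m :=
    lintegral_mono_ae (hae.mono fun x hx => hx u huT)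
  exact absurd hb (not_lt.2 (le_trans hmono2 (le_trans hfatou hlim1)))
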